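/- Let a, b be real with b² - a² > 0 and set c = √(b² - a²). For the Type I map X(u,θ) = (u, (a/c)u + cosh(θ)/√c, (b/c)u + sinh(θ)/√c), the determinant of the induced metric equals -(1/c³)(a sinh θ - b cosh θ)², and a sinh θ - b cosh θ ≠ 0 for every real θ. Hence the surface is timelike everywhere. -/

import Mathlib

/-- Lorentzian inner product on `ℝ × ℝ × ℝ` for the metric `dx² + dy² - dt²`. -/
def Lprod (p q : ℝ × ℝ × ℝ) : ℝ := p.1 * q.1 + p.2.1 * q.2.1 - p.2.2 * q.2.2

/-- For `b² - a² > 0`, `c = √(b²-a²)`, and the Type I singular-type surface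
`X(u,θ) = (u, (a/c)u + cosh θ/√c, (b/c)u + sinh θ/√c)`, the determinant of the induced
metric equals `-(1/c³)(a sinh θ - b cosh θ)²` and `a sinh θ - b cosh θ ≠ 0` for every `θ`;
hence the surface is timelike everywhere. -/
theorem stmt9 (a b c : ℝ) (hab : 0 < b ^ 2 - a ^ 2) (hc : c = Real.sqrt (b ^ 2 - a ^ 2))
    (X : ℝ → ℝ → ℝ × ℝ × ℝ)
    (hX : ∀ u θ, X u θ = (u, (a / c) * u + Real.cosh θ / Real.sqrt c,
        (b / c) * u + Real.sinh θ / Real.sqrt c)) :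
    ∀ u θ : ℝ,
      let Xu := deriv (fun u' => X u' θ) u
      let Xθ := deriv (fun θ' => X u θ') θ
      Lprod Xu Xu * Lprod Xθ Xθ - (Lprod Xu Xθ) ^ 2 =
        -(1 / c ^ 3) * (a * Real.sinh θ - b * Real.cosh θ) ^ 2 ∧
      a * Real.sinh θ - b * Real.cosh θ ≠ 0 ∧
      Lprod Xu Xu * Lprod Xθ Xθ - (Lprod Xu Xθ) ^ 2 < 0 := by
  have hcpos : 0 < c := hc ▸ Real.sqrt_pos.mpr hab
  have hc2 : c ^ 2 = b ^ 2 - a ^ 2 := by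
    rw [hc, Real.sq_sqrt hab.le]
  have hscpos : 0 < Real.sqrt c := Real.sqrt_pos.mpr hcpos
  have hsc2 : Real.sqrt c ^ 2 = c := Real.sq_sqrt hcpos.le
  intro u θ
  have hXu : deriv (fun u' => X u' θ) u = (1, a / c, b / c) := by
    have : HasDerivAt (fun u' => X u' θ) (1, a / c, b / c) u := by
      simp only [hX]
      have h1 : HasDerivAt (fun u' : ℝ => u') 1 u := hasDerivAt_id u
      have h2 : HasDerivAt (fun u' : ℝ => (a / c) * u' + Real.cosh θ / Real.sqrt c)
          (a / c) u := by
        simpa using (h1.const_mul (a / c)).add_const (Real.cosh θ / Real.sqrt c)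
      have h3 : HasDerivAt (fun u' : ℝ => (b / c) * u' + Real.sinh θ / Real.sqrt c)
          (b / c) u := by
        simpa using (h1.const_mul (b / c)).add_const (Real.sinh θ / Real.sqrt c)
      exact h1.prodMk (h2.prodMk h3)
    exact this.deriv
  have hXθ : deriv (fun θ' => X u θ') θ
      = (0, Real.sinh θ / Real.sqrt c, Real.cosh θ / Real.sqrt c) := by
    have : HasDerivAt (fun θ' => X u θ')
        (0, Real.sinh θ / Real.sqrt c, Real.cosh θ / Real.sqrt c) θ := by
      simp only [hX]
      have h1 : HasDerivAt (fun _ : ℝ => u) 0 θ := hasDerivAt_const θ u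
      have h2 : HasDerivAt (fun θ' : ℝ => (a / c) * u + Real.cosh θ' / Real.sqrt c)
          (Real.sinh θ / Real.sqrt c) θ := by
        simpa using (((Real.hasDerivAt_cosh θ).div_const (Real.sqrt c)).const_add
          ((a / c) * u))
      have h3 : HasDerivAt (fun θ' : ℝ => (b / c) * u + Real.sinh θ' / Real.sqrt c)
          (Real.cosh θ / Real.sqrt c) θ := by
        simpa using (((Real.hasDerivAt_sinh θ).div_const (Real.sqrt c)).const_add
          ((b / c) * u))
      exact h1.prodMk (h2.prodMk h3)
    exact this.deriv
  have hne : a * Real.sinh θ - b * Real.cosh θ ≠ 0 := by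
    intro h
    have hcosh := Real.cosh_sq θ
    have hcpos' := Real.cosh_pos θ
    nlinarith [sq_nonneg (Real.sinh θ), sq_nonneg (Real.cosh θ), sq_nonneg (a * Real.cosh θ - b * Real.sinh θ)]
  have hdet : Lprod (1, a / c, b / c) (1, a / c, b / c) *
        Lprod (0, Real.sinh θ / Real.sqrt c, Real.cosh θ / Real.sqrt c)
          (0, Real.sinh θ / Real.sqrt c, Real.cosh θ / Real.sqrt c) -
        (Lprod (1, a / c, b / c)
          (0, Real.sinh θ / Real.sqrt c, Real.cosh θ / Real.sqrt c)) ^ 2 =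
      -(1 / c ^ 3) * (a * Real.sinh θ - b * Real.cosh θ) ^ 2 := by
    simp only [Lprod]
    have hx : Real.sqrt c * Real.sqrt c = c := by nlinarith [hsc2]
    have hcc : (c * Real.sqrt c) ^ 2 = c ^ 3 := by
      rw [mul_pow, hsc2]; ring
    field_simp
    rw [hsc2]
    linear_combination (Real.sinh θ * Real.sinh θ - Real.cosh θ * Real.cosh θ) * c *
      hc2
  refine ⟨by rw [hXu, hXθ]; exact hdet, hne, ?_⟩
  rw [hXu, hXθ, hdet]
  have : 0 < (a * Real.sinh θ - b * Real.cosh θ) ^ 2 := by positivity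
  have hc3 : 0 < c ^ 3 := by positivity
  have h4 : 0 < (1 / c ^ 3) * (a * Real.sinh θ - b * Real.cosh θ) ^ 2 :=
    mul_pos (by positivity) this
  linarith
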